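/- Let r > 0 be a real constant, let k₁ : ℝ → ℝ be differentiable, let f, g : ℝ² → ℝ be differentiable, and assume 2g(t,w) − r·k₁(s)·sin(f(t,w)) ≠ 0 for all (s,t,w). Define K, H : ℝ³ → ℝ by K(s,t,w) = k₁(s)sin(f(t,w)) / ( r²( 2g(t,w) − r k₁(s) sin(f(t,w)) ) ) and H(s,t,w) = ( 3r k₁(s) sin(f(t,w)) − 4g(t,w) ) / ( 3r( 2g(t,w) − r k₁(s) sin(f(t,w)) ) ). Then at every point (s,t,w): ∂H/∂s·∂K/∂t − ∂H/∂t·∂K/∂s = 0, ∂H/∂s·∂K/∂w − ∂H/∂w·∂K/∂s = 0, and ∂H/∂t·∂K/∂w − ∂H/∂w·∂K/∂t = 0. -/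

import Mathlib

/-- The tubular hypersurface `T₁` over a pseudo null curve is Weingarten: the Jacobians
of `(H, K)` with respect to each pair of parameters vanish. -/
theorem pseudoNull_tube_Weingarten
    (r : ℝ) (hr : 0 < r) (k₁ : ℝ → ℝ) (hk₁ : Differentiable ℝ k₁)
    (f g : ℝ → ℝ → ℝ)
    (hf : Differentiable ℝ (Function.uncurry f))
    (hg : Differentiable ℝ (Function.uncurry g))
    (hden : ∀ s t w, 2 * g t w - r * k₁ s * Real.sin (f t w) ≠ 0)
    (K H : ℝ → ℝ → ℝ → ℝ)
    (hK : ∀ s t w, K s t w = k₁ s * Real.sin (f t w) /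
      (r ^ 2 * (2 * g t w - r * k₁ s * Real.sin (f t w))))
    (hH : ∀ s t w, H s t w = (3 * r * k₁ s * Real.sin (f t w) - 4 * g t w) /
      (3 * r * (2 * g t w - r * k₁ s * Real.sin (f t w)))) :
    ∀ s t w,
      deriv (fun x => H x t w) s * deriv (fun x => K s x w) t -
        deriv (fun x => H s x w) t * deriv (fun x => K x t w) s = 0 ∧
      deriv (fun x => H x t w) s * deriv (fun x => K s t x) w -
        deriv (fun x => H s t x) w * deriv (fun x => K x t w) s = 0 ∧
      deriv (fun x => H s x w) t * deriv (fun x => K s t x) w -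
        deriv (fun x => H s t x) w * deriv (fun x => K s x w) t = 0 := by
  have hr' : r ≠ 0 := ne_of_gt hr
  -- key affine relation : H = (r^2/3) K - 2/(3r)
  have key : ∀ s t w, H s t w = r ^ 2 / 3 * K s t w - 2 / (3 * r) := by
    intro s t w
    have hd := hden s t w
    have hd' : g t w * 2 - r * k₁ s * Real.sin (f t w) ≠ 0 := by rw [mul_comm]; exact hd
    rw [hH, hK]
    field_simp
    ring
  have dkey : ∀ (φ ψ : ℝ → ℝ) (x : ℝ), (∀ y, φ y = r ^ 2 / 3 * ψ y - 2 / (3 * r)) →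
      deriv φ x = r ^ 2 / 3 * deriv ψ x := by
    intro φ ψ x h
    have : φ = fun y => r ^ 2 / 3 * ψ y - 2 / (3 * r) := funext h
    rw [this]
    simp only [deriv_sub_const]
    exact deriv_const_mul_field _
  intro s t w
  have h1 : deriv (fun x => H x t w) s = r ^ 2 / 3 * deriv (fun x => K x t w) s :=
    dkey _ _ _ (fun y => key y t w)
  have h2 : deriv (fun x => H s x w) t = r ^ 2 / 3 * deriv (fun x => K s x w) t :=
    dkey _ _ _ (fun y => key s y w)
  have h3 : deriv (fun x => H s t x) w = r ^ 2 / 3 * deriv (fun x => K s t x) w :=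
    dkey _ _ _ (fun y => key s t y)
  refine ⟨?_, ?_, ?_⟩ <;> simp only [h1, h2, h3] <;> ring
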